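/- arXiv:2209.05918 — 2 statements merged into one kernel-verified Lean document; each statement's English description precedes it below -/
import Mathlib

section
/- Consider the complex Riccati ODE a₂'(t) = −K a₂(t) − (1/2)[u₁ e^{−κt} + u₃ (1 − e^{−κt})/κ]² + (1/2) η² a₂(t)², with a₂(0) = i u₂, where κ, K, η > 0 and u₁, u₂, u₃ ∈ ℝ. Then this ODE has a unique global solution on ℝ≥0, the real part of a₂(t) is nonpositive for all t ≥ 0, and |Im(a₂(t))| ≤ |u₂| for all t ≥ 0. -/
open Set Metric Complex

namespace RiccatiAux


/-- clamp to `[-R, R]` -/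
def clamp (R x : ℝ) : ℝ := max (-R) (min R x)

lemma clamp_mem {R : ℝ} (hR : 0 ≤ R) (x : ℝ) : clamp R x ∈ Icc (-R) R := by
  unfold clamp
  exact ⟨le_max_left _ _, max_le (by linarith) (min_le_left _ _)⟩

lemma abs_clamp_le {R : ℝ} (hR : 0 ≤ R) (x : ℝ) : |clamp R x| ≤ R := by
  have h := clamp_mem hR x
  exact abs_le.2 ⟨h.1, h.2⟩

lemma clamp_eq_self {R x : ℝ} (h : |x| ≤ R) : clamp R x = x := by
  rw [abs_le] at h
  unfold clamp
  rw [min_eq_right h.2, max_eq_right h.1]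

lemma clamp_nonpos {R x : ℝ} (hR : 0 ≤ R) (h : x ≤ 0) : clamp R x ≤ 0 := by
  unfold clamp
  exact max_le (by linarith) (min_le_of_right_le h)

lemma clamp_nonneg {R x : ℝ} (hR : 0 ≤ R) (h : 0 ≤ x) : 0 ≤ clamp R x := by
  unfold clamp
  exact le_max_of_le_right (le_min hR h)

lemma clamp_le_self {R x : ℝ} (hR : 0 ≤ R) (h : 0 ≤ x) : clamp R x ≤ x := by
  unfold clamp
  exact max_le (by linarith) (min_le_right _ _)

lemma clamp_le_of_le {R M x : ℝ} (hMR : M ≤ R) (h : x ≤ -M) : clamp R x ≤ -M := by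
  unfold clamp
  exact max_le (by linarith) (min_le_of_right_le h)

lemma mul_self_clamp_le {R x : ℝ} (hR : 0 ≤ R) (h : 0 ≤ x) : clamp R x ^ 2 ≤ R * x := by
  have h1 := clamp_nonneg hR h
  have h2 := clamp_le_self hR h
  have h3 : clamp R x ≤ R := (clamp_mem hR x).2
  nlinarith


/-- truncation of ℂ to the square `[-R,R]²` -/
noncomputable def phi (R : ℝ) (z : ℂ) : ℂ :=
  ((clamp R z.re : ℝ) : ℂ) + ((clamp R z.im : ℝ) : ℂ) * Complex.I

/-- the original Riccati field (with `ft` the current forcing value) -/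
noncomputable def FF (K η ft : ℝ) (z : ℂ) : ℂ :=
  -(K : ℂ) * z - ((1/2 : ℝ) : ℂ) * ((ft : ℝ) : ℂ) ^ 2 + ((1/2 : ℝ) : ℂ) * (η : ℂ) ^ 2 * z ^ 2

/-- the truncated Riccati field -/
noncomputable def GG (K η R ft : ℝ) (z : ℂ) : ℂ := FF K η ft (phi R z)

lemma phi_re (R : ℝ) (z : ℂ) : (phi R z).re = clamp R z.re := by simp [phi]
lemma phi_im (R : ℝ) (z : ℂ) : (phi R z).im = clamp R z.im := by simp [phi]

lemma FF_re (K η ft : ℝ) (z : ℂ) :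
    (FF K η ft z).re = -K * z.re - ft ^ 2 / 2 + η ^ 2 / 2 * (z.re ^ 2 - z.im ^ 2) := by
  simp [FF, pow_two, Complex.mul_re, Complex.mul_im]
  ring

lemma FF_im (K η ft : ℝ) (z : ℂ) :
    (FF K η ft z).im = -K * z.im + η ^ 2 * (z.re * z.im) := by
  simp [FF, pow_two, Complex.mul_re, Complex.mul_im]
  ring

lemma GG_re (K η R ft : ℝ) (z : ℂ) :
    (GG K η R ft z).re = -K * clamp R z.re - ft ^ 2 / 2
      + η ^ 2 / 2 * ((clamp R z.re) ^ 2 - (clamp R z.im) ^ 2) := by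
  rw [GG, FF_re, phi_re, phi_im]

lemma GG_im (K η R ft : ℝ) (z : ℂ) :
    (GG K η R ft z).im = -K * clamp R z.im + η ^ 2 * (clamp R z.re * clamp R z.im) := by
  rw [GG, FF_im, phi_re, phi_im]

lemma clamp_eq_self' {R x : ℝ} (h : |x| ≤ R) : clamp R x = x := by
  rw [abs_le] at h
  unfold clamp
  rw [min_eq_right h.2, max_eq_right h.1]

lemma phi_eq_self {R : ℝ} {z : ℂ} (h1 : |z.re| ≤ R) (h2 : |z.im| ≤ R) : phi R z = z := by
  rw [phi, clamp_eq_self' h1, clamp_eq_self' h2, Complex.re_add_im]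

lemma abs_clamp_le' {R : ℝ} (hR : 0 ≤ R) (x : ℝ) : |clamp R x| ≤ R := by
  rw [abs_le]
  unfold clamp
  exact ⟨le_max_left _ _, max_le (by linarith) (min_le_left _ _)⟩

lemma norm_phi_le {R : ℝ} (hR : 0 ≤ R) (z : ℂ) : ‖phi R z‖ ≤ 2 * R := by
  calc ‖phi R z‖ ≤ ‖((clamp R z.re : ℝ) : ℂ)‖ + ‖((clamp R z.im : ℝ) : ℂ) * Complex.I‖ :=
        norm_add_le _ _
    _ = |clamp R z.re| + |clamp R z.im| := by
        simp [Complex.norm_real]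
    _ ≤ R + R := add_le_add (abs_clamp_le' hR _) (abs_clamp_le' hR _)
    _ = 2 * R := by ring

lemma abs_min_sub_min_le_abs' (R x y : ℝ) : |min R x - min R y| ≤ |x - y| := by
  have h1 := le_abs_self (x - y)
  have h2 := neg_abs_le (x - y)
  rcases le_total R x with h | h <;> rcases le_total R y with h' | h'
  · rw [min_eq_left h, min_eq_left h']
    simp [abs_nonneg]
  · rw [min_eq_left h, min_eq_right h', abs_sub_le_iff]
    constructor <;> linarith
  · rw [min_eq_right h, min_eq_left h', abs_sub_le_iff]
    constructor <;> linarith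
  · rw [min_eq_right h, min_eq_right h']

lemma lipschitz_clamp (R x y : ℝ) : |clamp R x - clamp R y| ≤ |x - y| := by
  unfold clamp
  calc |max (-R) (min R x) - max (-R) (min R y)|
      = |max (min R x) (-R) - max (min R y) (-R)| := by rw [max_comm (-R), max_comm (-R)]
    _ ≤ |min R x - min R y| := abs_max_sub_max_le_abs _ _ _
    _ ≤ |x - y| := abs_min_sub_min_le_abs' _ _ _

lemma norm_phi_sub_le (R : ℝ) (z w : ℂ) : ‖phi R z - phi R w‖ ≤ 2 * ‖z - w‖ := by
  have hre : |z.re - w.re| ≤ ‖z - w‖ := by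
    simpa using Complex.abs_re_le_norm (z - w)
  have him : |z.im - w.im| ≤ ‖z - w‖ := by
    simpa using Complex.abs_im_le_norm (z - w)
  calc ‖phi R z - phi R w‖
      = ‖(((clamp R z.re - clamp R w.re : ℝ)) : ℂ)
          + (((clamp R z.im - clamp R w.im : ℝ)) : ℂ) * Complex.I‖ := by
        rw [phi, phi]; push_cast; ring_nf
    _ ≤ ‖(((clamp R z.re - clamp R w.re : ℝ)) : ℂ)‖
          + ‖(((clamp R z.im - clamp R w.im : ℝ)) : ℂ) * Complex.I‖ := norm_add_le _ _
    _ = |clamp R z.re - clamp R w.re| + |clamp R z.im - clamp R w.im| := by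
        simp [Complex.norm_real]
        rw [← Complex.ofReal_sub, ← Complex.ofReal_sub, Complex.norm_real, Complex.norm_real, Real.norm_eq_abs, Real.norm_eq_abs]
    _ ≤ |z.re - w.re| + |z.im - w.im| := add_le_add (lipschitz_clamp _ _ _) (lipschitz_clamp _ _ _)
    _ ≤ ‖z - w‖ + ‖z - w‖ := add_le_add hre him
    _ = 2 * ‖z - w‖ := by ring


noncomputable def ff (κ u₁ u₃ : ℝ) (t : ℝ) : ℝ :=
  u₁ * Real.exp (-κ * t) + u₃ * (1 - Real.exp (-κ * t)) / κ


lemma lipschitzWith_GG {K η R : ℝ} (hK : 0 ≤ K) (hη : 0 ≤ η) (hR : 0 ≤ R) (ft : ℝ) :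
    LipschitzWith (Real.toNNReal (2 * K + 4 * η ^ 2 * R)) (GG K η R ft) := by
  apply LipschitzWith.of_dist_le_mul
  intro z w
  rw [dist_eq_norm, dist_eq_norm, Real.coe_toNNReal _ (by positivity)]
  set a := phi R z
  set b := phi R w
  have hab : GG K η R ft z - GG K η R ft w
      = -(K : ℂ) * (a - b) + ((1/2 : ℝ) : ℂ) * (η : ℂ) ^ 2 * ((a + b) * (a - b)) := by
    simp only [GG, FF]
    ring
  have h1 : ‖a - b‖ ≤ 2 * ‖z - w‖ := norm_phi_sub_le R z w
  have h2 : ‖a + b‖ ≤ 4 * R := by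
    calc ‖a + b‖ ≤ ‖a‖ + ‖b‖ := norm_add_le _ _
      _ ≤ 2 * R + 2 * R := add_le_add (norm_phi_le hR z) (norm_phi_le hR w)
      _ = 4 * R := by ring
  calc ‖GG K η R ft z - GG K η R ft w‖
      ≤ ‖-(K : ℂ) * (a - b)‖ + ‖((1/2 : ℝ) : ℂ) * (η : ℂ) ^ 2 * ((a + b) * (a - b))‖ := by
        rw [hab]; exact norm_add_le _ _
    _ = K * ‖a - b‖ + 1/2 * η ^ 2 * (‖a + b‖ * ‖a - b‖) := by
        rw [norm_mul, norm_mul, norm_mul, norm_neg, norm_pow]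
        simp [Complex.norm_real, _root_.abs_of_nonneg hK, _root_.abs_of_nonneg hη]
    _ ≤ K * (2 * ‖z - w‖) + 1/2 * η ^ 2 * ((4 * R) * (2 * ‖z - w‖)) := by
        have hn : (0:ℝ) ≤ ‖a - b‖ := norm_nonneg _
        have hn2 : (0:ℝ) ≤ ‖z - w‖ := norm_nonneg _
        gcongr <;> first | exact Or.inl hK | skip
    _ = (2 * K + 4 * η ^ 2 * R) * ‖z - w‖ := by ring

lemma norm_GG_le {K η R A ft : ℝ} (hK : 0 ≤ K) (hη : 0 ≤ η) (hR : 0 ≤ R)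
    (hft : |ft| ≤ A) (z : ℂ) :
    ‖GG K η R ft z‖ ≤ K * (2 * R) + A ^ 2 / 2 + η ^ 2 / 2 * (2 * R) ^ 2 := by
  have hA : 0 ≤ A := (abs_nonneg ft).trans hft
  have h1 : ‖phi R z‖ ≤ 2 * R := norm_phi_le hR z
  calc ‖GG K η R ft z‖
      ≤ ‖-(K : ℂ) * phi R z - ((1/2 : ℝ) : ℂ) * ((ft : ℝ) : ℂ) ^ 2‖
        + ‖((1/2 : ℝ) : ℂ) * (η : ℂ) ^ 2 * (phi R z) ^ 2‖ := by
        rw [GG, FF]; exact norm_add_le _ _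
    _ ≤ (‖-(K : ℂ) * phi R z‖ + ‖((1/2 : ℝ) : ℂ) * ((ft : ℝ) : ℂ) ^ 2‖)
        + ‖((1/2 : ℝ) : ℂ) * (η : ℂ) ^ 2 * (phi R z) ^ 2‖ := by
        gcongr
        exact norm_sub_le _ _
    _ = K * ‖phi R z‖ + 1/2 * |ft| ^ 2 + 1/2 * η ^ 2 * ‖phi R z‖ ^ 2 := by
        rw [norm_mul, norm_mul, norm_mul, norm_mul, norm_neg, norm_pow, norm_pow, norm_pow]
        simp [Complex.norm_real, _root_.abs_of_nonneg hK, _root_.abs_of_nonneg hη]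
    _ ≤ K * (2 * R) + 1/2 * A ^ 2 + 1/2 * η ^ 2 * (2 * R) ^ 2 := by
        gcongr <;> first | exact Or.inl hK | exact norm_nonneg _ | exact abs_nonneg _ | assumption
    _ = K * (2 * R) + A ^ 2 / 2 + η ^ 2 / 2 * (2 * R) ^ 2 := by ring

lemma abs_ff_le {κ u₁ u₃ : ℝ} (hκ : 0 < κ) {t : ℝ} (ht : 0 ≤ t) :
    |ff κ u₁ u₃ t| ≤ |u₁| + |u₃| / κ := by
  have he1 : Real.exp (-κ * t) ≤ 1 := Real.exp_le_one_iff.2 (by nlinarith)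
  have he0 : 0 < Real.exp (-κ * t) := Real.exp_pos _
  calc |ff κ u₁ u₃ t| ≤ |u₁ * Real.exp (-κ * t)| + |u₃ * (1 - Real.exp (-κ * t)) / κ| :=
        abs_add_le _ _
    _ = |u₁| * Real.exp (-κ * t) + |u₃| * (1 - Real.exp (-κ * t)) / κ := by
        rw [abs_mul, abs_div, abs_mul, _root_.abs_of_pos he0, _root_.abs_of_nonneg (by linarith : (0:ℝ) ≤ 1 - Real.exp (-κ * t)), _root_.abs_of_pos hκ]
    _ ≤ |u₁| * 1 + |u₃| * 1 / κ := by
        gcongr <;> first | positivity | linarith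
    _ = |u₁| + |u₃| / κ := by ring

lemma abs_ff_le_glob {κ u₁ u₃ : ℝ} (hκ : 0 < κ) {t : ℝ} (ht : -1 ≤ t) :
    |ff κ u₁ u₃ t| ≤ |u₁| * Real.exp κ + |u₃| * (1 + Real.exp κ) / κ := by
  have he1 : Real.exp (-κ * t) ≤ Real.exp κ := Real.exp_le_exp.2 (by nlinarith)
  have he0 : 0 < Real.exp (-κ * t) := Real.exp_pos _
  calc |ff κ u₁ u₃ t| ≤ |u₁ * Real.exp (-κ * t)| + |u₃ * (1 - Real.exp (-κ * t)) / κ| :=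
        abs_add_le _ _
    _ = |u₁| * Real.exp (-κ * t) + |u₃| * |1 - Real.exp (-κ * t)| / κ := by
        rw [abs_mul, abs_div, abs_mul, _root_.abs_of_pos he0, _root_.abs_of_pos hκ]
    _ ≤ |u₁| * Real.exp κ + |u₃| * (1 + Real.exp κ) / κ := by
        have : |1 - Real.exp (-κ * t)| ≤ 1 + Real.exp κ := by
          rw [abs_le]; constructor <;> nlinarith
        gcongr <;> first | positivity | linarith

lemma continuous_ff (κ u₁ u₃ : ℝ) : Continuous (ff κ u₁ u₃) := by
  unfold ff
  fun_prop

lemma continuous_GG_in_t (K η R : ℝ) (z : ℂ) (κ u₁ u₃ : ℝ) :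
    Continuous (fun t => GG K η R (ff κ u₁ u₃ t) z) := by
  simp only [GG, FF]
  have := continuous_ff κ u₁ u₃
  fun_prop


/-- global existence for the truncated equation -/
lemma exists_global_sol (κ K η u₁ u₂ u₃ R : ℝ)
    (hκ : 0 < κ) (hK : 0 < K) (hη : 0 < η) (hR : 0 ≤ R) :
    ∃ a : ℝ → ℂ, a 0 = Complex.I * (u₂ : ℂ) ∧
      ∀ t : ℝ, 0 ≤ t → HasDerivAt a (GG K η R (ff κ u₁ u₃ t) (a t)) t := by
  set v : ℝ → ℂ → ℂ := fun t z => GG K η R (ff κ u₁ u₃ t) z with hv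
  set A : ℝ := |u₁| * Real.exp κ + |u₃| * (1 + Real.exp κ) / κ with hA
  set C : ℝ := K * (2 * R) + A ^ 2 / 2 + η ^ 2 / 2 * (2 * R) ^ 2 with hC
  have hA0 : 0 ≤ A := by positivity
  have hC0 : 0 ≤ C := by positivity
  set L : NNReal := Real.toNNReal (2 * K + 4 * η ^ 2 * R) with hL
  -- Picard-Lindelöf on [-1, n]
  have hsol : ∀ n : ℕ, ∃ α : ℝ → ℂ, α 0 = Complex.I * (u₂ : ℂ) ∧
      ∀ t ∈ Icc (-1 : ℝ) (n : ℝ), HasDerivWithinAt α (v t (α t)) (Icc (-1 : ℝ) (n : ℝ)) t := by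
    intro n
    have hpl : IsPicardLindelof v (tmin := -1) (tmax := (n : ℝ))
        ⟨0, ⟨by norm_num, Nat.cast_nonneg n⟩⟩ (Complex.I * (u₂ : ℂ))
        ⟨C * ((n : ℝ) + 1), by positivity⟩ 0 ⟨C, hC0⟩ L :=
      { lipschitzOnWith := fun t _ => (lipschitzWith_GG hK.le hη.le hR (ff κ u₁ u₃ t)).lipschitzOnWith
        continuousOn := fun z _ => (continuous_GG_in_t K η R z κ u₁ u₃).continuousOn
        norm_le := fun t ht z _ => norm_GG_le hK.le hη.le hR (abs_ff_le_glob hκ ht.1) z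
        mul_max_le := by
          simp only [NNReal.coe_mk, tsub_zero, sub_zero, sub_neg_eq_add, zero_add]
          have h1 : max (n : ℝ) 1 ≤ (n : ℝ) + 1 := by
            apply max_le <;> [linarith; (have := Nat.cast_nonneg (α := ℝ) n; linarith)]
          rw [NNReal.coe_zero, sub_zero]
          exact mul_le_mul_of_nonneg_left h1 hC0 }
    exact hpl.exists_eq_forall_mem_Icc_hasDerivWithinAt₀
  choose α hα0 hαd using hsol
  have hαd' : ∀ n : ℕ, ∀ t ∈ Ioo (-1 : ℝ) (n : ℝ), HasDerivAt (α n) (v t (α n t)) t :=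
    fun n t ht => (hαd n t (Ioo_subset_Icc_self ht)).hasDerivAt (Icc_mem_nhds ht.1 ht.2)
  have hcont : ∀ n : ℕ, ContinuousOn (α n) (Icc (-1 : ℝ) (n : ℝ)) :=
    fun n t ht => (hαd n t ht).continuousWithinAt
  -- uniqueness to glue the solutions
  have huniq : ∀ m n : ℕ, 1 ≤ m → 1 ≤ n →
      ∀ t ∈ Icc (-1 : ℝ) (min (m : ℝ) (n : ℝ)), α m t = α n t := by
    intro m n hm hn
    have hm' : (1 : ℝ) ≤ (m : ℝ) := by exact_mod_cast hm
    have hn' : (1 : ℝ) ≤ (n : ℝ) := by exact_mod_cast hn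
    have hb : (0 : ℝ) < min (m : ℝ) (n : ℝ) := lt_min (by linarith) (by linarith)
    have hss : Ioo (-1 : ℝ) (min (m : ℝ) (n : ℝ)) ⊆ Ioo (-1 : ℝ) (m : ℝ) :=
      Ioo_subset_Ioo le_rfl (min_le_left _ _)
    have hss' : Ioo (-1 : ℝ) (min (m : ℝ) (n : ℝ)) ⊆ Ioo (-1 : ℝ) (n : ℝ) :=
      Ioo_subset_Ioo le_rfl (min_le_right _ _)
    exact ODE_solution_unique_of_mem_Icc
      (fun t _ => (lipschitzWith_GG hK.le hη.le hR (ff κ u₁ u₃ t)).lipschitzOnWith (s := univ))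
      ⟨by norm_num, hb⟩
      ((hcont m).mono (Icc_subset_Icc le_rfl (min_le_left _ _)))
      (fun t ht => hαd' m t (hss ht)) (fun _ _ => trivial)
      ((hcont n).mono (Icc_subset_Icc le_rfl (min_le_right _ _)))
      (fun t ht => hαd' n t (hss' ht)) (fun _ _ => trivial)
      (by rw [hα0 m, hα0 n])
  -- glue
  refine ⟨fun t => α (⌈t⌉₊ + 1) t, by simpa using hα0 1, ?_⟩
  intro t ht
  set n : ℕ := ⌈t⌉₊ + 1 with hn
  have htn : t < (n : ℝ) := by
    have := Nat.le_ceil t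
    push_cast [hn]
    linarith
  have hkey : ∀ s ∈ Ioo (t - 1) (t + 1), α (⌈s⌉₊ + 1) s = α n s := by
    intro s hs
    apply huniq _ _ (Nat.le_add_left 1 _) (Nat.le_add_left 1 _)
    have hs1 : s ≤ ((⌈s⌉₊ : ℝ) + 1) := by
      have := Nat.le_ceil s
      linarith
    have hs2 : s ≤ (n : ℝ) := by
      have := Nat.le_ceil t
      push_cast [hn]
      linarith [hs.2]
    constructor
    · linarith [hs.1]
    · apply le_min _ hs2
      push_cast
      exact hs1
  have heq : (fun s => α (⌈s⌉₊ + 1) s) =ᶠ[nhds t] α n := by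
    filter_upwards [Ioo_mem_nhds (by linarith : t - 1 < t) (by linarith : t < t + 1)] with s hs
    exact hkey s hs
  have hder : HasDerivAt (α n) (v t (α n t)) t :=
    hαd' n t ⟨by linarith, htn⟩
  have hat : α (⌈t⌉₊ + 1) t = α n t := rfl
  rw [show GG K η R (ff κ u₁ u₃ t) (α (⌈t⌉₊ + 1) t) = v t (α n t) from rfl]
  exact hder.congr_of_eventuallyEq heq


section Invariance

variable {κ K η u₁ u₂ u₃ R : ℝ} {a : ℝ → ℂ}

lemma hasDerivAt_re {d : ℂ} {t : ℝ} (h : HasDerivAt a d t) :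
    HasDerivAt (fun s => (a s).re) d.re t :=
  Complex.reCLM.hasFDerivAt.comp_hasDerivAt t h

lemma hasDerivAt_im {d : ℂ} {t : ℝ} (h : HasDerivAt a d t) :
    HasDerivAt (fun s => (a s).im) d.im t :=
  Complex.imCLM.hasFDerivAt.comp_hasDerivAt t h

/-- Invariance part (i): the real part stays nonpositive. -/
lemma re_nonpos (hK : 0 < K) (hη : 0 < η) (hR : 0 ≤ R)
    (ha0 : a 0 = Complex.I * (u₂ : ℂ))
    (hd : ∀ t : ℝ, 0 ≤ t → HasDerivAt a (GG K η R (ff κ u₁ u₃ t) (a t)) t) :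
    ∀ t : ℝ, 0 ≤ t → (a t).re ≤ 0 := by
  intro t₁ ht₁
  by_contra hpos
  push_neg at hpos
  set x : ℝ → ℝ := fun s => (a s).re with hxdef
  have hx : ∀ s : ℝ, 0 ≤ s → HasDerivAt x ((GG K η R (ff κ u₁ u₃ s) (a s)).re) s :=
    fun s hs => hasDerivAt_re (hd s hs)
  have hx0 : x 0 = 0 := by simp [hxdef, ha0]
  have ht₁pos : 0 < t₁ := by
    rcases ht₁.lt_or_eq with h | h
    · exact h
    · exfalso
      rw [← h] at hpos
      have hx0' : (a 0).re = 0 := hx0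
      linarith
  have hcx : ContinuousOn x (Icc 0 t₁) := fun s hs => ((hx s hs.1).continuousAt).continuousWithinAt
  set S : Set ℝ := Icc 0 t₁ ∩ x ⁻¹' Iic 0 with hS
  have hSclosed : IsClosed S := hcx.preimage_isClosed_of_isClosed isClosed_Icc isClosed_Iic
  have hSne : S.Nonempty := ⟨0, ⟨le_rfl, ht₁pos.le⟩, by simp [hx0]⟩
  have hSbdd : BddAbove S := ⟨t₁, fun s hs => hs.1.2⟩
  set t₀ : ℝ := sSup S with ht₀def
  have ht₀S : t₀ ∈ S := hSclosed.csSup_mem hSne hSbdd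
  have ht₀0 : 0 ≤ t₀ := ht₀S.1.1
  have ht₀le : t₀ ≤ t₁ := ht₀S.1.2
  have hxt₀ : x t₀ ≤ 0 := ht₀S.2
  have ht₀lt : t₀ < t₁ := by
    rcases ht₀le.lt_or_eq with h | h
    · exact h
    · exfalso; rw [h] at hxt₀; exact absurd hpos (not_lt.2 hxt₀)
  have hgt : ∀ s ∈ Ioc t₀ t₁, 0 < x s := by
    intro s hs
    by_contra hle
    push_neg at hle
    have : s ∈ S := ⟨⟨ht₀0.trans hs.1.le, hs.2⟩, hle⟩
    exact absurd (le_csSup hSbdd this) (not_le.2 hs.1)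
  set L : ℝ := η ^ 2 * R / 2 with hLdef
  set h : ℝ → ℝ := fun s => x s * Real.exp (-(L * s)) with hhdef
  have hh : ∀ s : ℝ, 0 ≤ s → HasDerivAt h
      (((GG K η R (ff κ u₁ u₃ s) (a s)).re - L * x s) * Real.exp (-(L * s))) s := by
    intro s hs
    have he : HasDerivAt (fun s : ℝ => Real.exp (-(L * s))) (Real.exp (-(L * s)) * (-L)) s := by
      have h1 : HasDerivAt (fun s : ℝ => -(L * s)) (-L) s := by
        have := ((hasDerivAt_id' s).const_mul L).neg
        simp only [mul_one] at this
        exact this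
      exact h1.exp
    have := (hx s hs).fun_mul he
    exact this.congr_deriv (by ring)
  have hderiv_nonpos : ∀ s ∈ Ioo t₀ t₁,
      ((GG K η R (ff κ u₁ u₃ s) (a s)).re - L * x s) * Real.exp (-(L * s)) ≤ 0 := by
    intro s hs
    have hs0 : 0 ≤ s := ht₀0.trans hs.1.le
    have hxs : 0 < x s := hgt s ⟨hs.1, hs.2.le⟩
    have hcr0 : 0 ≤ clamp R ((a s).re) := clamp_nonneg hR hxs.le
    have hcrsq : clamp R ((a s).re) ^ 2 ≤ R * x s := mul_self_clamp_le hR hxs.le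
    have hGGre : (GG K η R (ff κ u₁ u₃ s) (a s)).re ≤ L * x s := by
      rw [GG_re, hLdef]
      have h1 := sq_nonneg (ff κ u₁ u₃ s)
      have h2 := sq_nonneg (clamp R ((a s).im))
      nlinarith [mul_nonneg hK.le hcr0, sq_nonneg η]
    have hexp : 0 < Real.exp (-(L * s)) := Real.exp_pos _
    nlinarith
  have hanti : AntitoneOn h (Icc t₀ t₁) := by
    apply antitoneOn_of_deriv_nonpos (convex_Icc t₀ t₁)
    · apply ContinuousOn.mul
      · exact hcx.mono (Icc_subset_Icc ht₀0 le_rfl)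
      · exact (Real.continuous_exp.comp (continuous_const.mul continuous_id).neg).continuousOn
    · rw [interior_Icc]
      exact fun s hs => ((hh s (ht₀0.trans hs.1.le)).differentiableAt).differentiableWithinAt
    · rw [interior_Icc]
      intro s hs
      rw [(hh s (ht₀0.trans hs.1.le)).deriv]
      exact hderiv_nonpos s hs
  have h1 : h t₁ ≤ h t₀ := hanti ⟨le_rfl, ht₀le⟩ ⟨ht₀le, le_rfl⟩ ht₀le
  have h2 : h t₀ ≤ 0 := mul_nonpos_of_nonpos_of_nonneg hxt₀ (Real.exp_pos _).le
  have h3 : 0 < h t₁ := mul_pos hpos (Real.exp_pos _)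
  linarith

/-- Invariance part (ii): the square of the imaginary part is bounded by `u₂ ^ 2`. -/
lemma im_sq_le (hK : 0 < K) (hη : 0 < η) (hR : 0 ≤ R)
    (ha0 : a 0 = Complex.I * (u₂ : ℂ))
    (hd : ∀ t : ℝ, 0 ≤ t → HasDerivAt a (GG K η R (ff κ u₁ u₃ t) (a t)) t) :
    ∀ t : ℝ, 0 ≤ t → (a t).im ^ 2 ≤ u₂ ^ 2 := by
  have hre := re_nonpos (κ := κ) (u₁ := u₁) (u₂ := u₂) (u₃ := u₃) hK hη hR ha0 hd
  intro t₁ ht₁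
  set y : ℝ → ℝ := fun s => (a s).im with hydef
  have hy : ∀ s : ℝ, 0 ≤ s → HasDerivAt y ((GG K η R (ff κ u₁ u₃ s) (a s)).im) s :=
    fun s hs => hasDerivAt_im (hd s hs)
  have hy0 : y 0 = u₂ := by simp [hydef, ha0]
  set g : ℝ → ℝ := fun s => y s ^ 2 with hgdef
  have hg : ∀ s : ℝ, 0 ≤ s → HasDerivAt g
      (2 * y s ^ 1 * (GG K η R (ff κ u₁ u₃ s) (a s)).im) s := by
    intro s hs
    exact_mod_cast (hy s hs).pow 2
  have hderiv_nonpos : ∀ s ∈ Ioo (0 : ℝ) t₁,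
      2 * y s ^ 1 * (GG K η R (ff κ u₁ u₃ s) (a s)).im ≤ 0 := by
    intro s hs
    have hs0 : (0:ℝ) ≤ s := hs.1.le
    have hcr : clamp R ((a s).re) ≤ 0 := clamp_nonpos hR (hre s hs0)
    have hyci : 0 ≤ y s * clamp R ((a s).im) := by
      rcases le_total 0 (y s) with h | h
      · exact mul_nonneg h (clamp_nonneg hR h)
      · have := clamp_nonpos hR h
        nlinarith
    have hfac : -K + η ^ 2 * clamp R ((a s).re) ≤ 0 := by nlinarith [sq_nonneg η]
    rw [GG_im]
    have : -K * clamp R ((a s).im) + η ^ 2 * (clamp R ((a s).re) * clamp R ((a s).im))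
        = clamp R ((a s).im) * (-K + η ^ 2 * clamp R ((a s).re)) := by ring
    rw [this]
    rw [pow_one]
    nlinarith [hyci, hfac]
  have hanti : AntitoneOn g (Icc 0 t₁) := by
    apply antitoneOn_of_deriv_nonpos (convex_Icc 0 t₁)
    · exact fun s hs => ((hg s hs.1).continuousAt).continuousWithinAt
    · rw [interior_Icc]
      exact fun s hs => ((hg s hs.1.le).differentiableAt).differentiableWithinAt
    · rw [interior_Icc]
      intro s hs
      rw [(hg s hs.1.le).deriv]
      exact hderiv_nonpos s hs
  have h1 : g t₁ ≤ g 0 := hanti ⟨le_rfl, ht₁⟩ ⟨ht₁, le_rfl⟩ ht₁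
  have h2 : g 0 = u₂ ^ 2 := by rw [hgdef]; simp only []; rw [hy0]
  rw [← h2]
  exact h1

set_option maxHeartbeats 1000000 in
/-- Invariance part (iii): the real part stays above `-M`. -/
lemma re_ge (hK : 0 < K) (hη : 0 < η) (hR : 0 ≤ R) {M A0 : ℝ}
    (hM0 : 0 < M) (hMR : M ≤ R) (hu₂R : |u₂| ≤ R)
    (hff : ∀ t : ℝ, 0 ≤ t → |ff κ u₁ u₃ t| ≤ A0)
    (hgap : A0 ^ 2 / 2 + η ^ 2 / 2 * u₂ ^ 2 ≤ η ^ 2 / 2 * M ^ 2)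
    (ha0 : a 0 = Complex.I * (u₂ : ℂ))
    (hd : ∀ t : ℝ, 0 ≤ t → HasDerivAt a (GG K η R (ff κ u₁ u₃ t) (a t)) t) :
    ∀ t : ℝ, 0 ≤ t → -M ≤ (a t).re := by
  have him := im_sq_le (κ := κ) (u₁ := u₁) (u₂ := u₂) (u₃ := u₃) hK hη hR ha0 hd
  intro t₁ ht₁
  by_contra hneg
  push_neg at hneg
  set x : ℝ → ℝ := fun s => (a s).re with hxdef
  have hx : ∀ s : ℝ, 0 ≤ s → HasDerivAt x ((GG K η R (ff κ u₁ u₃ s) (a s)).re) s :=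
    fun s hs => hasDerivAt_re (hd s hs)
  have hx0 : x 0 = 0 := by simp [hxdef, ha0]
  have ht₁pos : 0 < t₁ := by
    rcases ht₁.lt_or_eq with h | h
    · exact h
    · exfalso
      rw [← h] at hneg
      have hx0' : (a 0).re = 0 := hx0
      linarith
  have hcx : ContinuousOn x (Icc 0 t₁) := fun s hs => ((hx s hs.1).continuousAt).continuousWithinAt
  set S : Set ℝ := Icc 0 t₁ ∩ x ⁻¹' Ici (-M) with hS
  have hSclosed : IsClosed S := hcx.preimage_isClosed_of_isClosed isClosed_Icc isClosed_Ici
  have hSne : S.Nonempty := ⟨0, ⟨le_rfl, ht₁pos.le⟩, by simp [hx0]; linarith⟩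
  have hSbdd : BddAbove S := ⟨t₁, fun s hs => hs.1.2⟩
  set t₀ : ℝ := sSup S with ht₀def
  have ht₀S : t₀ ∈ S := hSclosed.csSup_mem hSne hSbdd
  have ht₀0 : 0 ≤ t₀ := ht₀S.1.1
  have ht₀le : t₀ ≤ t₁ := ht₀S.1.2
  have hxt₀ : -M ≤ x t₀ := ht₀S.2
  have ht₀lt : t₀ < t₁ := by
    rcases ht₀le.lt_or_eq with h | h
    · exact h
    · exfalso; rw [h] at hxt₀; exact absurd hneg (not_lt.2 hxt₀)
  have hlt : ∀ s ∈ Ioc t₀ t₁, x s < -M := by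
    intro s hs
    by_contra hle
    push_neg at hle
    have : s ∈ S := ⟨⟨ht₀0.trans hs.1.le, hs.2⟩, hle⟩
    exact absurd (le_csSup hSbdd this) (not_le.2 hs.1)
  have hderiv_nonneg : ∀ s ∈ Ioo t₀ t₁, 0 ≤ (GG K η R (ff κ u₁ u₃ s) (a s)).re := by
    intro s hs
    have hs0 : 0 ≤ s := ht₀0.trans hs.1.le
    have hxs : x s < -M := hlt s ⟨hs.1, hs.2.le⟩
    have hcr : clamp R ((a s).re) ≤ -M := clamp_le_of_le hMR hxs.le
    have hcrsq : M ^ 2 ≤ clamp R ((a s).re) ^ 2 := by nlinarith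
    have hys : |(a s).im| ≤ R := by
      have h1 := him s hs0
      have h2 : |(a s).im| ≤ |u₂| := by
        nlinarith [_root_.sq_abs ((a s).im), _root_.sq_abs u₂, abs_nonneg ((a s).im), abs_nonneg u₂]
      linarith
    have hci : clamp R ((a s).im) = (a s).im := clamp_eq_self' hys
    have hcisq : clamp R ((a s).im) ^ 2 ≤ u₂ ^ 2 := by rw [hci]; exact him s hs0
    have hftsq : (ff κ u₁ u₃ s) ^ 2 ≤ A0 ^ 2 := by
      have := hff s hs0
      nlinarith [abs_nonneg (ff κ u₁ u₃ s), _root_.sq_abs (ff κ u₁ u₃ s)]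
    rw [GG_re]
    have hKcr : 0 ≤ -K * clamp R ((a s).re) := by nlinarith
    have e1 : η ^ 2 / 2 * M ^ 2 ≤ η ^ 2 / 2 * clamp R ((a s).re) ^ 2 :=
      mul_le_mul_of_nonneg_left hcrsq (by positivity)
    have e2 : η ^ 2 / 2 * clamp R ((a s).im) ^ 2 ≤ η ^ 2 / 2 * u₂ ^ 2 :=
      mul_le_mul_of_nonneg_left hcisq (by positivity)
    have e3 : (ff κ u₁ u₃ s) ^ 2 / 2 ≤ A0 ^ 2 / 2 := by linarith
    have expand : -K * clamp R ((a s).re) - ff κ u₁ u₃ s ^ 2 / 2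
        + η ^ 2 / 2 * (clamp R ((a s).re) ^ 2 - clamp R ((a s).im) ^ 2)
        = -K * clamp R ((a s).re) - ff κ u₁ u₃ s ^ 2 / 2
        + (η ^ 2 / 2 * clamp R ((a s).re) ^ 2 - η ^ 2 / 2 * clamp R ((a s).im) ^ 2) := by ring
    rw [expand]
    linarith
  have hmono : MonotoneOn x (Icc t₀ t₁) := by
    apply monotoneOn_of_deriv_nonneg (convex_Icc t₀ t₁)
    · exact hcx.mono (Icc_subset_Icc ht₀0 le_rfl)
    · rw [interior_Icc]
      exact fun s hs => ((hx s (ht₀0.trans hs.1.le)).differentiableAt).differentiableWithinAt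
    · rw [interior_Icc]
      intro s hs
      rw [(hx s (ht₀0.trans hs.1.le)).deriv]
      exact hderiv_nonneg s hs
  have h1 : x t₀ ≤ x t₁ := hmono ⟨le_rfl, ht₀le⟩ ⟨ht₀le, le_rfl⟩ ht₀le
  linarith

end Invariance

end RiccatiAux
open RiccatiAux in
set_option maxHeartbeats 1000000 in
/-- The complex Riccati ODE
`a₂' = −K a₂ − ½ [u₁ e^{−κt} + u₃ (1−e^{−κt})/κ]² + ½ η² a₂²`, `a₂(0) = i u₂`,
has a unique global solution on `ℝ≥0`; its real part stays nonpositive and its imaginary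
part is bounded by `|u₂|`. -/
theorem riccati_global_solution (κ K η u₁ u₂ u₃ : ℝ)
    (hκ : 0 < κ) (hK : 0 < K) (hη : 0 < η) :
    ∃ a₂ : ℝ → ℂ,
      (a₂ 0 = Complex.I * (u₂ : ℂ) ∧
        ∀ t : ℝ, 0 ≤ t → HasDerivAt a₂
          (-(K : ℂ) * a₂ t
            - (1 / 2) * ((((u₁ * Real.exp (-κ * t) + u₃ * (1 - Real.exp (-κ * t)) / κ) : ℝ) : ℂ)) ^ 2
            + (1 / 2) * (η : ℂ) ^ 2 * (a₂ t) ^ 2) t)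
      ∧ (∀ b : ℝ → ℂ,
          (b 0 = Complex.I * (u₂ : ℂ) ∧
            ∀ t : ℝ, 0 ≤ t → HasDerivAt b
              (-(K : ℂ) * b t
                - (1 / 2) * ((((u₁ * Real.exp (-κ * t) + u₃ * (1 - Real.exp (-κ * t)) / κ) : ℝ) : ℂ)) ^ 2
                + (1 / 2) * (η : ℂ) ^ 2 * (b t) ^ 2) t) →
          ∀ t : ℝ, 0 ≤ t → b t = a₂ t)
      ∧ (∀ t : ℝ, 0 ≤ t → (a₂ t).re ≤ 0 ∧ |(a₂ t).im| ≤ |u₂|) := by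
  classical
  obtain ⟨A0, hA0def⟩ : ∃ x : ℝ, x = |u₁| + |u₃| / κ := ⟨_, rfl⟩
  obtain ⟨B, hBdef⟩ : ∃ x : ℝ, x = A0 ^ 2 / 2 + η ^ 2 * u₂ ^ 2 / 2 := ⟨_, rfl⟩
  obtain ⟨M, hMdef⟩ : ∃ x : ℝ, x = (Real.sqrt (2 * B) + 1) / η := ⟨_, rfl⟩
  obtain ⟨R, hRdef⟩ : ∃ x : ℝ, x = M + |u₂| + 1 := ⟨_, rfl⟩
  have hB0 : 0 ≤ B := by rw [hBdef]; positivity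
  have hsqrt0 : 0 ≤ Real.sqrt (2 * B) := Real.sqrt_nonneg _
  have hM0 : 0 < M := by rw [hMdef]; positivity
  have hMR : M ≤ R := by rw [hRdef]; have := abs_nonneg u₂; linarith
  have hR0 : 0 ≤ R := by have := abs_nonneg u₂; linarith
  have hu₂R : |u₂| ≤ R := by rw [hRdef]; linarith
  have hgap : A0 ^ 2 / 2 + η ^ 2 / 2 * u₂ ^ 2 ≤ η ^ 2 / 2 * M ^ 2 := by
    have hηM : η * M = Real.sqrt (2 * B) + 1 := by
      rw [hMdef]; field_simp
    have hsq : Real.sqrt (2 * B) ^ 2 = 2 * B := Real.sq_sqrt (by positivity)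
    have hsq2 : η ^ 2 * M ^ 2 = (Real.sqrt (2 * B) + 1) ^ 2 := by
      rw [← hηM]; ring
    have h5 : η ^ 2 * M ^ 2 = 2 * B + 2 * Real.sqrt (2 * B) + 1 := by
      rw [hsq2]; linear_combination hsq
    linarith [hBdef]
  obtain ⟨a, ha0, hd⟩ := exists_global_sol κ K η u₁ u₂ u₃ R hκ hK hη hR0
  have hre := re_nonpos (κ := κ) (u₁ := u₁) (u₂ := u₂) (u₃ := u₃) hK hη hR0 ha0 hd
  have him := im_sq_le (κ := κ) (u₁ := u₁) (u₂ := u₂) (u₃ := u₃) hK hη hR0 ha0 hd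
  have hge := re_ge (κ := κ) (u₁ := u₁) (u₂ := u₂) (u₃ := u₃) hK hη hR0 hM0 hMR hu₂R
    (fun t ht => hA0def ▸ abs_ff_le hκ ht) hgap ha0 hd
  have habsim : ∀ t : ℝ, 0 ≤ t → |(a t).im| ≤ |u₂| := by
    intro t ht
    have h1 := him t ht
    nlinarith [_root_.sq_abs ((a t).im), _root_.sq_abs u₂, abs_nonneg ((a t).im), abs_nonneg u₂]
  -- the solution satisfies the original (untruncated) equation
  have hFF : ∀ t : ℝ, 0 ≤ t → HasDerivAt a (FF K η (ff κ u₁ u₃ t) (a t)) t := by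
    intro t ht
    have hphi : phi R (a t) = a t := by
      apply phi_eq_self
      · rw [abs_le]
        constructor
        · have := hge t ht; linarith
        · have := hre t ht; linarith
      · exact (habsim t ht).trans hu₂R
    have h := hd t ht
    rwa [GG, hphi] at h
  have hmatch : ∀ (c : ℝ → ℂ), ∀ t : ℝ, FF K η (ff κ u₁ u₃ t) (c t)
      = -(K : ℂ) * c t
        - (1 / 2) * ((((u₁ * Real.exp (-κ * t) + u₃ * (1 - Real.exp (-κ * t)) / κ) : ℝ) : ℂ)) ^ 2
        + (1 / 2) * (η : ℂ) ^ 2 * (c t) ^ 2 := by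
    intro c t
    rw [FF, ff]
    norm_num
  refine ⟨a, ⟨ha0, fun t ht => by rw [← hmatch a t]; exact hFF t ht⟩, ?_, ?_⟩
  · -- uniqueness
    rintro b ⟨hb0, hbd⟩ t ht
    have hbd' : ∀ s : ℝ, 0 ≤ s → HasDerivAt b (FF K η (ff κ u₁ u₃ s) (b s)) s := by
      intro s hs
      rw [hmatch b s]
      exact hbd s hs
    have hca : ContinuousOn a (Icc 0 t) := fun s hs => (hFF s hs.1).continuousAt.continuousWithinAt
    have hcb : ContinuousOn b (Icc 0 t) := fun s hs => (hbd' s hs.1).continuousAt.continuousWithinAt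
    obtain ⟨ρa, hρa⟩ := isCompact_Icc.exists_bound_of_continuousOn hca
    obtain ⟨ρb, hρb⟩ := isCompact_Icc.exists_bound_of_continuousOn hcb
    set ρ : ℝ := max ρa ρb with hρdef
    have hρ0 : 0 ≤ ρ := le_trans (norm_nonneg (a 0)) (le_max_of_le_left (hρa 0 ⟨le_rfl, ht⟩))
    have hlip : ∀ s : ℝ, LipschitzOnWith (Real.toNNReal (K + η ^ 2 * ρ))
        (fun z => FF K η (ff κ u₁ u₃ s) z) (closedBall (0 : ℂ) ρ) := by
      intro s
      rw [lipschitzOnWith_iff_dist_le_mul]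
      intro z hz w hw
      rw [dist_eq_norm, dist_eq_norm, Real.coe_toNNReal _ (by positivity)]
      rw [mem_closedBall_zero_iff] at hz hw
      have hab : FF K η (ff κ u₁ u₃ s) z - FF K η (ff κ u₁ u₃ s) w
          = -(K : ℂ) * (z - w) + ((1/2 : ℝ) : ℂ) * (η : ℂ) ^ 2 * ((z + w) * (z - w)) := by
        rw [FF, FF]; ring
      have h2 : ‖z + w‖ ≤ 2 * ρ := by
        calc ‖z + w‖ ≤ ‖z‖ + ‖w‖ := norm_add_le _ _
          _ ≤ ρ + ρ := add_le_add hz hw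
          _ = 2 * ρ := by ring
      calc ‖FF K η (ff κ u₁ u₃ s) z - FF K η (ff κ u₁ u₃ s) w‖
          ≤ ‖-(K : ℂ) * (z - w)‖ + ‖((1/2 : ℝ) : ℂ) * (η : ℂ) ^ 2 * ((z + w) * (z - w))‖ := by
            rw [hab]; exact norm_add_le _ _
        _ = K * ‖z - w‖ + 1/2 * η ^ 2 * (‖z + w‖ * ‖z - w‖) := by
            rw [norm_mul, norm_mul, norm_mul, norm_neg, norm_pow]
            simp [Complex.norm_real, _root_.abs_of_nonneg hK.le, _root_.abs_of_nonneg hη.le]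
        _ ≤ K * ‖z - w‖ + 1/2 * η ^ 2 * ((2 * ρ) * ‖z - w‖) := by
            have := norm_nonneg (z - w)
            gcongr
        _ = (K + η ^ 2 * ρ) * ‖z - w‖ := by ring
    have key : EqOn b a (Icc 0 t) := by
      apply ODE_solution_unique_of_mem_Icc_right
        (v := fun s z => FF K η (ff κ u₁ u₃ s) z)
        (s := fun _ => closedBall (0 : ℂ) ρ) (fun s _ => hlip s)
        hcb (fun s hs => (hbd' s hs.1).hasDerivWithinAt)
        (fun s hs => mem_closedBall_zero_iff.2
          ((hρb s (Ico_subset_Icc_self hs)).trans (le_max_right _ _)))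
        hca (fun s hs => (hFF s hs.1).hasDerivWithinAt)
        (fun s hs => mem_closedBall_zero_iff.2
          ((hρa s (Ico_subset_Icc_self hs)).trans (le_max_left _ _)))
        (by rw [hb0, ha0])
    exact key ⟨ht, le_rfl⟩
  · exact fun t ht => ⟨hre t ht, habsim t ht⟩
end

section
/- Let ζ satisfy dζ_t = −K(ζ_t − σ²(t))dt + η√ζ_t dW_t with K, η > 0 and σ²(t) = γ₀ + Σ_{k=1}^{m} γ_k sin(ξ_k t) + Σ_{k=1}^{m} δ_k cos(ξ_k t) nonnegative. Then E[ζ_{t+Δ} | F_t] = θ₀ + φ₀ ζ_t + Σ_k θ_k sin(ξ_k t) + Σ_k φ_k cos(ξ_k t), where θ₀ = γ₀(1 − e^{−KΔ}), φ₀ = e^{−KΔ}, θ_k = γ_k K (K[cos(ξ_kΔ) − e^{−KΔ}] + ξ_k sin(ξ_kΔ))/(K² + ξ_k²) − δ_k K (K sin(ξ_kΔ) − ξ_k(cos(ξ_kΔ) − e^{−KΔ}))/(K² + ξ_k²), φ_k = γ_k K (K sin(ξ_kΔ) − ξ_k(cos(ξ_kΔ) − e^{−KΔ}))/(K² + ξ_k²)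 + δ_k K (K[cos(ξ_kΔ) − e^{−KΔ}] + ξ_k sin(ξ_kΔ))/(K² + ξ_k²). -/
open MeasureTheory ProbabilityTheory Real Filter


private lemma kmul_hasDerivAt (K x : ℝ) : HasDerivAt (fun u : ℝ => K * u) K x := by
  simpa using (hasDerivAt_id x).const_mul K

private lemma exp_integral (K a b : ℝ) (hK : K ≠ 0) :
    ∫ u in a..b, Real.exp (K*u) = (Real.exp (K*b) - Real.exp (K*a)) / K := by
  have h : ∀ x ∈ Set.uIcc a b, HasDerivAt (fun u => Real.exp (K*u) / K) (Real.exp (K*x)) x := by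
    intro x _
    have := ((kmul_hasDerivAt K x).exp).div_const K
    simpa [mul_comm, mul_div_assoc, mul_div_cancel_left₀ _ hK] using this
  rw [intervalIntegral.integral_eq_sub_of_hasDerivAt h
    ((Real.continuous_exp.comp (continuous_const.mul continuous_id)).intervalIntegrable a b)]
  ring

private lemma expsin_integral (K x a b : ℝ) (h : K^2 + x^2 ≠ 0) :
    ∫ u in a..b, Real.exp (K*u) * Real.sin (x*u)
      = (Real.exp (K*b) * (K * Real.sin (x*b) - x * Real.cos (x*b))
        - Real.exp (K*a) * (K * Real.sin (x*a) - x * Real.cos (x*a))) / (K^2 + x^2) := by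
  have h1 : ∀ s ∈ Set.uIcc a b, HasDerivAt
      (fun u => Real.exp (K*u) * (K * Real.sin (x*u) - x * Real.cos (x*u)) / (K^2 + x^2))
      (Real.exp (K*s) * Real.sin (x*s)) s := by
    intro s _
    have he := (kmul_hasDerivAt K s).exp
    have hs := (kmul_hasDerivAt x s).sin
    have hc := (kmul_hasDerivAt x s).cos
    have := ((he.mul ((hs.const_mul K).sub (hc.const_mul x))).div_const (K^2+x^2))
    refine this.congr_deriv ?_
    simp only [Pi.sub_apply, Pi.add_apply, Pi.mul_apply]
    rw [div_eq_iff h]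
    ring
  rw [intervalIntegral.integral_eq_sub_of_hasDerivAt h1
    (((Real.continuous_exp.comp (continuous_const.mul continuous_id)).mul
      ((Real.continuous_sin.comp (continuous_const.mul continuous_id)))).intervalIntegrable a b)]
  ring

private lemma expcos_integral (K x a b : ℝ) (h : K^2 + x^2 ≠ 0) :
    ∫ u in a..b, Real.exp (K*u) * Real.cos (x*u)
      = (Real.exp (K*b) * (K * Real.cos (x*b) + x * Real.sin (x*b))
        - Real.exp (K*a) * (K * Real.cos (x*a) + x * Real.sin (x*a))) / (K^2 + x^2) := by
  have h1 : ∀ s ∈ Set.uIcc a b, HasDerivAt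
      (fun u => Real.exp (K*u) * (K * Real.cos (x*u) + x * Real.sin (x*u)) / (K^2 + x^2))
      (Real.exp (K*s) * Real.cos (x*s)) s := by
    intro s _
    have he := (kmul_hasDerivAt K s).exp
    have hs := (kmul_hasDerivAt x s).sin
    have hc := (kmul_hasDerivAt x s).cos
    have := ((he.mul ((hc.const_mul K).add (hs.const_mul x))).div_const (K^2+x^2))
    refine this.congr_deriv ?_
    simp only [Pi.sub_apply, Pi.add_apply, Pi.mul_apply]
    rw [div_eq_iff h]
    ring
  rw [intervalIntegral.integral_eq_sub_of_hasDerivAt h1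
    (((Real.continuous_exp.comp (continuous_const.mul continuous_id)).mul
      ((Real.continuous_cos.comp (continuous_const.mul continuous_id)))).intervalIntegrable a b)]
  ring

private lemma sin_part (K x t Δ : ℝ) (hK : 0 < K) :
    K * Real.exp (-(K*(t+Δ))) *
      ((Real.exp (K*(t+Δ)) * (K * Real.sin (x*(t+Δ)) - x * Real.cos (x*(t+Δ)))
        - Real.exp (K*t) * (K * Real.sin (x*t) - x * Real.cos (x*t))) / (K^2 + x^2))
    = K * ((K * (Real.cos (x*Δ) - Real.exp (-K*Δ)) + x * Real.sin (x*Δ)) / (K^2 + x^2))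
        * Real.sin (x*t)
      + K * ((K * Real.sin (x*Δ) - x * (Real.cos (x*Δ) - Real.exp (-K*Δ))) / (K^2 + x^2))
        * Real.cos (x*t) := by
  have hd : (0:ℝ) < K^2 + x^2 := by positivity
  rw [show x*(t+Δ) = x*t + x*Δ by ring, show K*(t+Δ) = K*t + K*Δ by ring,
    show -(K*t + K*Δ) = -(K*t) + -(K*Δ) by ring, Real.sin_add, Real.cos_add,
    Real.exp_add, Real.exp_add, Real.exp_neg (K*t), Real.exp_neg (K*Δ),
    show -K*Δ = -(K*Δ) by ring, Real.exp_neg (K*Δ)]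
  field_simp
  ring

private lemma cos_part (K x t Δ : ℝ) (hK : 0 < K) :
    K * Real.exp (-(K*(t+Δ))) *
      ((Real.exp (K*(t+Δ)) * (K * Real.cos (x*(t+Δ)) + x * Real.sin (x*(t+Δ)))
        - Real.exp (K*t) * (K * Real.cos (x*t) + x * Real.sin (x*t))) / (K^2 + x^2))
    = -(K * ((K * Real.sin (x*Δ) - x * (Real.cos (x*Δ) - Real.exp (-K*Δ))) / (K^2 + x^2)))
        * Real.sin (x*t)
      + K * ((K * (Real.cos (x*Δ) - Real.exp (-K*Δ)) + x * Real.sin (x*Δ)) / (K^2 + x^2))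
        * Real.cos (x*t) := by
  have hd : (0:ℝ) < K^2 + x^2 := by positivity
  rw [show x*(t+Δ) = x*t + x*Δ by ring, show K*(t+Δ) = K*t + K*Δ by ring,
    show -(K*t + K*Δ) = -(K*t) + -(K*Δ) by ring, Real.sin_add, Real.cos_add,
    Real.exp_add, Real.exp_add, Real.exp_neg (K*t), Real.exp_neg (K*Δ),
    show -K*Δ = -(K*Δ) by ring, Real.exp_neg (K*Δ)]
  field_simp
  ring

private lemma gamma0_part (K γ₀ t Δ : ℝ) (hK : 0 < K) :
    K * Real.exp (-(K*(t+Δ))) * (γ₀ * ((Real.exp (K*(t+Δ)) - Real.exp (K*t)) / K))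
      = γ₀ * (1 - Real.exp (-K*Δ)) := by
  rw [show K*(t+Δ) = K*t + K*Δ by ring, show -(K*t + K*Δ) = -(K*t) + -(K*Δ) by ring,
    Real.exp_add, Real.exp_add, Real.exp_neg (K*t), show -K*Δ = -(K*Δ) by ring,
    Real.exp_neg (K*Δ)]
  field_simp

private lemma const_val (K γ₀ Δ t : ℝ) (hK : 0 < K)
    (m : ℕ) (γ δ ξ : ℕ → ℝ) (σsq : ℝ → ℝ)
    (hσsq : ∀ u, σsq u = γ₀ + (∑ k ∈ Finset.Icc 1 m, γ k * Real.sin (ξ k * u))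
        + (∑ k ∈ Finset.Icc 1 m, δ k * Real.cos (ξ k * u))) :
    K * Real.exp (-(K*(t+Δ))) * (∫ u in t..(t+Δ), Real.exp (K*u) * σsq u)
      = γ₀ * (1 - Real.exp (-K * Δ))
        + (∑ k ∈ Finset.Icc 1 m,
            (γ k * K * ((K * (Real.cos (ξ k * Δ) - Real.exp (-K * Δ)) + ξ k * Real.sin (ξ k * Δ))
                / (K ^ 2 + ξ k ^ 2))
             - δ k * K * ((K * Real.sin (ξ k * Δ) - ξ k * (Real.cos (ξ k * Δ) - Real.exp (-K * Δ)))
                / (K ^ 2 + ξ k ^ 2))) * Real.sin (ξ k * t))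
        + (∑ k ∈ Finset.Icc 1 m,
            (γ k * K * ((K * Real.sin (ξ k * Δ) - ξ k * (Real.cos (ξ k * Δ) - Real.exp (-K * Δ)))
                / (K ^ 2 + ξ k ^ 2))
             + δ k * K * ((K * (Real.cos (ξ k * Δ) - Real.exp (-K * Δ)) + ξ k * Real.sin (ξ k * Δ))
                / (K ^ 2 + ξ k ^ 2))) * Real.cos (ξ k * t)) := by
  have hexpc : Continuous fun u : ℝ => Real.exp (K*u) :=
    Real.continuous_exp.comp (continuous_const.mul continuous_id)
  have hsplit : (∫ u in t..(t+Δ), Real.exp (K*u) * σsq u)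
      = γ₀ * (∫ u in t..(t+Δ), Real.exp (K*u))
        + (∑ k ∈ Finset.Icc 1 m, γ k * ∫ u in t..(t+Δ), Real.exp (K*u) * Real.sin (ξ k * u))
        + (∑ k ∈ Finset.Icc 1 m, δ k * ∫ u in t..(t+Δ), Real.exp (K*u) * Real.cos (ξ k * u)) := by
    have h1 : (∫ u in t..(t+Δ), Real.exp (K*u) * σsq u)
        = ∫ u in t..(t+Δ), (γ₀ * Real.exp (K*u)
          + ((∑ k ∈ Finset.Icc 1 m, γ k * (Real.exp (K*u) * Real.sin (ξ k * u)))
          + (∑ k ∈ Finset.Icc 1 m, δ k * (Real.exp (K*u) * Real.cos (ξ k * u))))) := by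
      refine intervalIntegral.integral_congr fun u _ => ?_
      have hA : ∑ k ∈ Finset.Icc 1 m, Real.exp (K*u) * (γ k * Real.sin (ξ k * u))
          = ∑ k ∈ Finset.Icc 1 m, γ k * (Real.exp (K*u) * Real.sin (ξ k * u)) :=
        Finset.sum_congr rfl fun k _ => by ring
      have hB : ∑ k ∈ Finset.Icc 1 m, Real.exp (K*u) * (δ k * Real.cos (ξ k * u))
          = ∑ k ∈ Finset.Icc 1 m, δ k * (Real.exp (K*u) * Real.cos (ξ k * u)) :=
        Finset.sum_congr rfl fun k _ => by ring
      rw [hσsq u, mul_add, mul_add, Finset.mul_sum, Finset.mul_sum, hA, hB]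
      ring
    have hcs : ∀ k : ℕ, Continuous fun u => γ k * (Real.exp (K*u) * Real.sin (ξ k * u)) :=
      fun k => continuous_const.mul (hexpc.mul
        (Real.continuous_sin.comp (continuous_const.mul continuous_id)))
    have hcc : ∀ k : ℕ, Continuous fun u => δ k * (Real.exp (K*u) * Real.cos (ξ k * u)) :=
      fun k => continuous_const.mul (hexpc.mul
        (Real.continuous_cos.comp (continuous_const.mul continuous_id)))
    rw [h1, intervalIntegral.integral_add (f := fun u => γ₀ * Real.exp (K*u))
        (g := fun u => (∑ k ∈ Finset.Icc 1 m, γ k * (Real.exp (K*u) * Real.sin (ξ k * u)))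
          + (∑ k ∈ Finset.Icc 1 m, δ k * (Real.exp (K*u) * Real.cos (ξ k * u))))
        ((continuous_const.mul hexpc).intervalIntegrable _ _)
        (((continuous_finset_sum _ fun k _ => hcs k).add
          (continuous_finset_sum _ fun k _ => hcc k)).intervalIntegrable _ _),
      intervalIntegral.integral_add
        (f := fun u => ∑ k ∈ Finset.Icc 1 m, γ k * (Real.exp (K*u) * Real.sin (ξ k * u)))
        (g := fun u => ∑ k ∈ Finset.Icc 1 m, δ k * (Real.exp (K*u) * Real.cos (ξ k * u)))
        ((continuous_finset_sum _ fun k _ => hcs k).intervalIntegrable _ _)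
        ((continuous_finset_sum _ fun k _ => hcc k).intervalIntegrable _ _),
      intervalIntegral.integral_const_mul,
      intervalIntegral.integral_finset_sum (fun k _ => ((hcs k).intervalIntegrable _ _)),
      intervalIntegral.integral_finset_sum (fun k _ => ((hcc k).intervalIntegrable _ _))]
    simp only [intervalIntegral.integral_const_mul]
    ring
  rw [hsplit]
  have hd : ∀ k : ℕ, (K^2 + (ξ k)^2) ≠ 0 := fun k => by positivity
  rw [exp_integral K t (t+Δ) (ne_of_gt hK)]
  rw [mul_add, mul_add]
  rw [Finset.mul_sum, Finset.mul_sum]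
  have hsin : ∀ k ∈ Finset.Icc 1 m, K * Real.exp (-(K*(t+Δ))) *
      (γ k * ∫ u in t..(t+Δ), Real.exp (K*u) * Real.sin (ξ k * u))
      = γ k * (K * ((K * (Real.cos (ξ k * Δ) - Real.exp (-K*Δ)) + ξ k * Real.sin (ξ k * Δ)) / (K^2 + (ξ k)^2))
          * Real.sin (ξ k * t))
        + γ k * (K * ((K * Real.sin (ξ k * Δ) - ξ k * (Real.cos (ξ k * Δ) - Real.exp (-K*Δ))) / (K^2 + (ξ k)^2))
          * Real.cos (ξ k * t)) := by
    intro k _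
    rw [expsin_integral K (ξ k) t (t+Δ) (hd k)]
    linear_combination (γ k) * sin_part K (ξ k) t Δ hK
  have hcos : ∀ k ∈ Finset.Icc 1 m, K * Real.exp (-(K*(t+Δ))) *
      (δ k * ∫ u in t..(t+Δ), Real.exp (K*u) * Real.cos (ξ k * u))
      = -(δ k * (K * ((K * Real.sin (ξ k * Δ) - ξ k * (Real.cos (ξ k * Δ) - Real.exp (-K*Δ))) / (K^2 + (ξ k)^2))
          * Real.sin (ξ k * t)))
        + δ k * (K * ((K * (Real.cos (ξ k * Δ) - Real.exp (-K*Δ)) + ξ k * Real.sin (ξ k * Δ)) / (K^2 + (ξ k)^2))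
          * Real.cos (ξ k * t)) := by
    intro k _
    rw [expcos_integral K (ξ k) t (t+Δ) (hd k)]
    linear_combination (δ k) * cos_part K (ξ k) t Δ hK
  rw [Finset.sum_congr rfl hsin, Finset.sum_congr rfl hcos]
  rw [show K * Real.exp (-(K*(t+Δ))) * (γ₀ * ((Real.exp (K*(t+Δ)) - Real.exp (K*t)) / K))
      = γ₀ * (1 - Real.exp (-K*Δ)) from gamma0_part K γ₀ t Δ hK]
  rw [Finset.sum_add_distrib, Finset.sum_add_distrib]
  have e1 : ∀ k ∈ Finset.Icc 1 m,
      (γ k * K * ((K * (Real.cos (ξ k * Δ) - Real.exp (-K * Δ)) + ξ k * Real.sin (ξ k * Δ)) / (K ^ 2 + ξ k ^ 2))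
       - δ k * K * ((K * Real.sin (ξ k * Δ) - ξ k * (Real.cos (ξ k * Δ) - Real.exp (-K * Δ))) / (K ^ 2 + ξ k ^ 2)))
        * Real.sin (ξ k * t)
      = γ k * (K * ((K * (Real.cos (ξ k * Δ) - Real.exp (-K*Δ)) + ξ k * Real.sin (ξ k * Δ)) / (K^2 + (ξ k)^2)) * Real.sin (ξ k * t))
        + -(δ k * (K * ((K * Real.sin (ξ k * Δ) - ξ k * (Real.cos (ξ k * Δ) - Real.exp (-K*Δ))) / (K^2 + (ξ k)^2)) * Real.sin (ξ k * t))) :=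
    fun k _ => by ring
  have e2 : ∀ k ∈ Finset.Icc 1 m,
      (γ k * K * ((K * Real.sin (ξ k * Δ) - ξ k * (Real.cos (ξ k * Δ) - Real.exp (-K * Δ))) / (K ^ 2 + ξ k ^ 2))
       + δ k * K * ((K * (Real.cos (ξ k * Δ) - Real.exp (-K * Δ)) + ξ k * Real.sin (ξ k * Δ)) / (K ^ 2 + ξ k ^ 2)))
        * Real.cos (ξ k * t)
      = γ k * (K * ((K * Real.sin (ξ k * Δ) - ξ k * (Real.cos (ξ k * Δ) - Real.exp (-K*Δ))) / (K^2 + (ξ k)^2)) * Real.cos (ξ k * t))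
        + δ k * (K * ((K * (Real.cos (ξ k * Δ) - Real.exp (-K*Δ)) + ξ k * Real.sin (ξ k * Δ)) / (K^2 + (ξ k)^2)) * Real.cos (ξ k * t)) :=
    fun k _ => by ring
  rw [Finset.sum_congr rfl e1, Finset.sum_congr rfl e2,
    Finset.sum_add_distrib, Finset.sum_add_distrib]
  ring

private lemma primitive_hasDerivAt {f : ℝ → ℝ} (hf : Continuous f) (s : ℝ) :
    HasDerivAt (fun x => ∫ u in (0:ℝ)..x, f u) (f s) s :=
  intervalIntegral.integral_hasDerivAt_right (hf.intervalIntegrable 0 s)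
    hf.stronglyMeasurable.stronglyMeasurableAtFilter hf.continuousAt

private lemma primitive_continuous {f : ℝ → ℝ} (hf : Continuous f) :
    Continuous (fun x => ∫ u in (0:ℝ)..x, f u) :=
  continuous_iff_continuousAt.2 fun s => (primitive_hasDerivAt hf s).continuousAt

private lemma pathwise (K η z0 : ℝ) (σs z b : ℝ → ℝ) (hσc : Continuous σs)
    (hzc : Continuous z) (hbc : Continuous b) (hb0 : b 0 = 0)
    (hsde : ∀ s, z s = z0 - K * (∫ u in (0:ℝ)..s, (z u - σs u)) + η * b s) (s : ℝ) :
    Real.exp (K*s) * z s = z0 + K * (∫ u in (0:ℝ)..s, Real.exp (K*u) * σs u)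
      + η * (Real.exp (K*s) * b s - K * ∫ u in (0:ℝ)..s, Real.exp (K*u) * b u) := by
  set P : ℝ → ℝ := fun x => ∫ u in (0:ℝ)..x, (z u - σs u) with hP
  set Q : ℝ → ℝ := fun x => ∫ u in (0:ℝ)..x, Real.exp (K*u) * σs u with hQ
  set R : ℝ → ℝ := fun x => ∫ u in (0:ℝ)..x, Real.exp (K*u) * b u with hR
  set G : ℝ → ℝ := fun x => Real.exp (K*x) * (z0 - K * P x) - K * Q x + η * K * R x with hG
  have hDG : ∀ x, HasDerivAt G 0 x := by
    intro x
    have hPd : HasDerivAt P (z x - σs x) x := primitive_hasDerivAt (hzc.sub hσc) x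
    have hQd : HasDerivAt Q (Real.exp (K*x) * σs x) x :=
      primitive_hasDerivAt ((Real.continuous_exp.comp (continuous_const.mul continuous_id)).mul hσc) x
    have hRd : HasDerivAt R (Real.exp (K*x) * b x) x :=
      primitive_hasDerivAt ((Real.continuous_exp.comp (continuous_const.mul continuous_id)).mul hbc) x
    have he := (kmul_hasDerivAt K x).exp
    have hD := ((he.mul ((hPd.const_mul K).const_sub z0)).sub (hQd.const_mul K)).add
      (hRd.const_mul (η * K))
    have hzx := hsde x
    have hval : Real.exp (K * x) * K * (z0 - K * P x) + Real.exp (K * x) * -(K * (z x - σs x))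
        - K * (Real.exp (K*x) * σs x) + η * K * (Real.exp (K*x) * b x) = 0 := by
      have : z0 - K * P x = z x - η * b x := by rw [hP]; simp only []; linarith [hzx]
      rw [this]; ring
    rw [hval] at hD
    exact hD
  have hconst : ∀ x, G x = G 0 := by
    intro x
    have := is_const_of_deriv_eq_zero (f := G) (fun y => (hDG y).differentiableAt)
      (fun y => (hDG y).deriv) x 0
    exact this
  have hG0 : G 0 = z0 := by
    simp [hG, hP, hQ, hR, intervalIntegral.integral_same]
  have hx := hconst s
  rw [hG0] at hx
  have hzs : z0 - K * P s = z s - η * b s := by rw [hP]; simp only []; linarith [hsde s]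
  have hx' : Real.exp (K*s) * (z0 - K * P s) - K * Q s + η * K * R s = z0 := hx
  rw [hzs] at hx'
  show Real.exp (K*s) * z s = z0 + K * Q s + η * (Real.exp (K*s) * b s - K * R s)
  nlinarith [hx']

private lemma mart_part {Ω : Type*} {m0 : MeasurableSpace Ω}
    (μ : Measure Ω) [IsProbabilityMeasure μ] (ℱ : Filtration ℝ m0)
    (K t Δ : ℝ) (hK : 0 < K) (hle : t ≤ t + Δ)
    (B : ℝ → Ω → ℝ) (hB : Martingale B ℱ μ)
    (hBcont : ∀ ω, Continuous fun u => B u ω) :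
    Integrable (fun ω => B (t+Δ) ω - Real.exp (-(K*Δ)) * B t ω
      - K * Real.exp (-(K*(t+Δ))) * ∫ u in t..(t+Δ), Real.exp (K*u) * B u ω) μ ∧
    μ[(fun ω => B (t+Δ) ω - Real.exp (-(K*Δ)) * B t ω
      - K * Real.exp (-(K*(t+Δ))) * ∫ u in t..(t+Δ), Real.exp (K*u) * B u ω)|ℱ t]
      =ᵐ[μ] 0 := by
  haveI : SigmaFinite (μ.trim (ℱ.le t)) := by infer_instance
  have hexpc : Continuous fun u : ℝ => Real.exp (K*u) :=
    Real.continuous_exp.comp (continuous_const.mul continuous_id)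
  have e1 : Real.exp (-(K*(t+Δ))) * Real.exp (K*(t+Δ)) = 1 := by
    rw [← Real.exp_add]; simp
  have e2 : Real.exp (-(K*(t+Δ))) * Real.exp (K*t) = Real.exp (-(K*Δ)) := by
    rw [← Real.exp_add]; ring_nf
  have hBmeas : ∀ u, StronglyMeasurable (B u) := fun u => (hB.stronglyAdapted u).mono (ℱ.le u)
  have hjoint : StronglyMeasurable (Function.uncurry B) :=
    stronglyMeasurable_uncurry_of_continuous_of_stronglyMeasurable hBcont hBmeas
  have hFmeas : StronglyMeasurable fun p : ℝ × Ω => Real.exp (K * p.1) * B p.1 p.2 :=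
    (hexpc.stronglyMeasurable.comp_measurable measurable_fst).mul hjoint
  have habs : ∀ u, u ≤ t + Δ → ∫ ω, |B u ω| ∂μ ≤ ∫ ω, |B (t+Δ) ω| ∂μ := by
    intro u hu
    have h1 : B u =ᵐ[μ] μ[B (t+Δ)|ℱ u] := (hB.condExp_ae_eq hu).symm
    calc ∫ ω, |B u ω| ∂μ = ∫ ω, |(μ[B (t+Δ)|ℱ u]) ω| ∂μ :=
        integral_congr_ae (h1.mono fun ω h => by dsimp only; rw [h])
      _ ≤ ∫ ω, |B (t+Δ) ω| ∂μ := integral_abs_condExp_le _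
  have hprodInt : ∀ s : Set Ω, MeasurableSet s →
      Integrable (fun p : ℝ × Ω => Real.exp (K * p.1) * B p.1 p.2)
        ((volume.restrict (Set.Ioc t (t+Δ))).prod (μ.restrict s)) := by
    intro s hs
    have hmeas' : AEStronglyMeasurable (fun p : ℝ × Ω => Real.exp (K * p.1) * B p.1 p.2)
        ((volume.restrict (Set.Ioc t (t+Δ))).prod (μ.restrict s)) :=
      hFmeas.aestronglyMeasurable
    rw [integrable_prod_iff hmeas']
    constructor
    · refine Eventually.of_forall fun u => ?_
      show Integrable (fun ω => Real.exp (K * u) * B u ω) (μ.restrict s)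
      exact ((hB.integrable u).restrict).const_mul _
    · have hgint : Integrable (fun _ : ℝ => Real.exp (K*(t+Δ)) * ∫ ω, |B (t+Δ) ω| ∂μ)
          (volume.restrict (Set.Ioc t (t+Δ))) :=
        integrableOn_const measure_Ioc_lt_top.ne
      refine Integrable.mono' hgint hmeas'.norm.integral_prod_right' ?_
      filter_upwards [ae_restrict_mem measurableSet_Ioc] with u hu
      have hub : u ≤ t + Δ := hu.2
      have h0 : (fun ω => ‖Real.exp (K*u) * B u ω‖) = fun ω => Real.exp (K*u) * |B u ω| := by
        funext ω
        rw [norm_mul, Real.norm_eq_abs, Real.norm_eq_abs, abs_of_pos (Real.exp_pos _)]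
      rw [Real.norm_eq_abs, abs_of_nonneg (integral_nonneg fun ω => norm_nonneg _)]
      calc ∫ ω, ‖Real.exp (K*u) * B u ω‖ ∂(μ.restrict s)
          = Real.exp (K*u) * ∫ ω, |B u ω| ∂(μ.restrict s) := by
            rw [h0, integral_const_mul]
        _ ≤ Real.exp (K*u) * ∫ ω, |B u ω| ∂μ := by
            refine mul_le_mul_of_nonneg_left ?_ (Real.exp_pos _).le
            exact setIntegral_le_integral (hB.integrable u).abs
              (Eventually.of_forall fun ω => abs_nonneg _)
        _ ≤ Real.exp (K*(t+Δ)) * ∫ ω, |B (t+Δ) ω| ∂μ := by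
            refine mul_le_mul (Real.exp_le_exp.2 (mul_le_mul_of_nonneg_left hub hK.le))
              (habs u hub) (integral_nonneg fun ω => abs_nonneg _) (Real.exp_pos _).le
  have hIint : Integrable (fun ω => ∫ u in t..(t+Δ), Real.exp (K*u) * B u ω) μ := by
    have h1 := hprodInt Set.univ MeasurableSet.univ
    rw [Measure.restrict_univ] at h1
    refine h1.integral_prod_right.congr (Eventually.of_forall fun ω => ?_)
    exact (intervalIntegral.integral_of_le hle).symm
  have hswap : ∀ s : Set Ω, MeasurableSet[ℱ t] s →
      ∫ ω in s, (∫ u in t..(t+Δ), Real.exp (K*u) * B u ω) ∂μ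
        = ((Real.exp (K*(t+Δ)) - Real.exp (K*t)) / K) * ∫ ω in s, B t ω ∂μ := by
    intro s hs
    have hs0 : MeasurableSet s := ℱ.le t s hs
    have h1 : (∫ ω in s, (∫ u in t..(t+Δ), Real.exp (K*u) * B u ω) ∂μ)
        = ∫ ω in s, (∫ u in Set.Ioc t (t+Δ), Real.exp (K*u) * B u ω) ∂μ := by
      refine setIntegral_congr_ae hs0 (Eventually.of_forall fun ω _ => ?_)
      exact intervalIntegral.integral_of_le hle
    rw [h1, ← integral_integral_swap (hprodInt s hs0)]
    have h2 : ∀ᵐ u ∂(volume.restrict (Set.Ioc t (t+Δ))),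
        (∫ ω in s, Real.exp (K*u) * B u ω ∂μ) = Real.exp (K*u) * ∫ ω in s, B t ω ∂μ := by
      filter_upwards [ae_restrict_mem measurableSet_Ioc] with u hu
      rw [integral_const_mul, ← hB.setIntegral_eq hu.1.le hs]
    rw [integral_congr_ae h2, integral_mul_const,
      show (∫ u in Set.Ioc t (t+Δ), Real.exp (K*u) ∂volume)
          = ∫ u in t..(t+Δ), Real.exp (K*u) from (intervalIntegral.integral_of_le hle).symm,
      exp_integral K t (t+Δ) (ne_of_gt hK)]
  have hNint : Integrable (fun ω => B (t+Δ) ω - Real.exp (-(K*Δ)) * B t ω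
      - K * Real.exp (-(K*(t+Δ))) * ∫ u in t..(t+Δ), Real.exp (K*u) * B u ω) μ :=
    ((hB.integrable (t+Δ)).sub ((hB.integrable t).const_mul _)).sub (hIint.const_mul _)
  refine ⟨hNint, ?_⟩
  refine (ae_eq_condExp_of_forall_setIntegral_eq (ℱ.le t) hNint
    (fun s _ _ => (integrable_zero _ _ _).integrableOn)
    (fun s hs hμs => ?_)
    (StronglyMeasurable.aestronglyMeasurable
      (@stronglyMeasurable_zero Ω ℝ (ℱ t) _ _))).symm
  simp only [Pi.zero_apply, integral_zero]
  have hs0 : MeasurableSet s := ℱ.le t s hs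
  have hint1 : ∫ ω in s, (B (t+Δ) ω - Real.exp (-(K*Δ)) * B t ω
      - K * Real.exp (-(K*(t+Δ))) * ∫ u in t..(t+Δ), Real.exp (K*u) * B u ω) ∂μ
      = (∫ ω in s, B (t+Δ) ω ∂μ) - Real.exp (-(K*Δ)) * (∫ ω in s, B t ω ∂μ)
        - K * Real.exp (-(K*(t+Δ)))
          * ∫ ω in s, (∫ u in t..(t+Δ), Real.exp (K*u) * B u ω) ∂μ := by
    have hi1 : Integrable (fun ω => B (t+Δ) ω - Real.exp (-(K*Δ)) * B t ω) (μ.restrict s) :=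
      ((hB.integrable (t+Δ)).sub ((hB.integrable t).const_mul _)).restrict
    have hi2 : Integrable (fun ω => K * Real.exp (-(K*(t+Δ)))
        * ∫ u in t..(t+Δ), Real.exp (K*u) * B u ω) (μ.restrict s) :=
      (hIint.const_mul _).restrict
    have hi3 : Integrable (fun ω => Real.exp (-(K*Δ)) * B t ω) (μ.restrict s) :=
      ((hB.integrable t).const_mul _).restrict
    rw [integral_sub hi1 hi2, integral_sub ((hB.integrable (t+Δ)).restrict) hi3,
      integral_const_mul, integral_const_mul]
  rw [hint1, hswap s hs, ← hB.setIntegral_eq hle hs]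
  have hKne : K ≠ 0 := ne_of_gt hK
  field_simp
  linear_combination (∫ ω in s, B t ω ∂μ) * e1 - (∫ ω in s, B t ω ∂μ) * e2

set_option maxHeartbeats 1600000 in
/-- Conditional expectation of the seasonal CIR volatility process
`dζ_t = −K(ζ_t − σ²(t))dt + η√ζ_t dW_t` with
`σ²(t) = γ₀ + Σ_{k=1}^m γ_k sin(ξ_k t) + Σ_{k=1}^m δ_k cos(ξ_k t)`:
`E[ζ_{t+Δ}|F_t] = θ₀ + φ₀ ζ_t + Σ_k θ_k sin(ξ_k t) + Σ_k φ_k cos(ξ_k t)` with the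
explicit coefficients.  The SDE is encoded in semimartingale form with martingale
part `η·B`, `B` of quadratic variation `∫ζ`. -/
theorem seasonal_cir_condexp {Ω : Type*} {m0 : MeasurableSpace Ω}
    (μ : Measure Ω) [IsProbabilityMeasure μ] (ℱ : Filtration ℝ m0)
    (K η γ₀ Δ : ℝ) (hK : 0 < K) (hη : 0 < η) (hΔ : 0 < Δ)
    (m : ℕ) (γ δ : ℕ → ℝ) (ξ : ℕ → ℝ)
    (σsq : ℝ → ℝ)
    (hσsq : ∀ t, σsq t = γ₀ + (∑ k ∈ Finset.Icc 1 m, γ k * Real.sin (ξ k * t))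
        + (∑ k ∈ Finset.Icc 1 m, δ k * Real.cos (ξ k * t)))
    (hσnn : ∀ t, 0 ≤ σsq t)
    (ζ B : ℝ → Ω → ℝ)
    (hζnn : ∀ t ω, 0 ≤ ζ t ω)
    (hζadapted : Adapted ℱ ζ)
    (hζint : ∀ t, Integrable (ζ t) μ)
    (hζcont : ∀ ω, Continuous fun t => ζ t ω)
    (hB : Martingale B ℱ μ) (hB0 : ∀ ω, B 0 ω = 0)
    (hQV : Martingale (fun t ω => (B t ω) ^ 2 - ∫ u in (0:ℝ)..t, ζ u ω) ℱ μ)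
    (hSDE : ∀ t ω, ζ t ω = ζ 0 ω - K * (∫ u in (0:ℝ)..t, (ζ u ω - σsq u)) + η * B t ω) :
    ∀ t : ℝ, 0 ≤ t →
      μ[ζ (t + Δ) | ℱ t] =ᵐ[μ] fun ω =>
        γ₀ * (1 - Real.exp (-K * Δ)) + Real.exp (-K * Δ) * ζ t ω
        + (∑ k ∈ Finset.Icc 1 m,
            (γ k * K * ((K * (Real.cos (ξ k * Δ) - Real.exp (-K * Δ)) + ξ k * Real.sin (ξ k * Δ))
                / (K ^ 2 + ξ k ^ 2))
             - δ k * K * ((K * Real.sin (ξ k * Δ) - ξ k * (Real.cos (ξ k * Δ) - Real.exp (-K * Δ)))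
                / (K ^ 2 + ξ k ^ 2))) * Real.sin (ξ k * t))
        + (∑ k ∈ Finset.Icc 1 m,
            (γ k * K * ((K * Real.sin (ξ k * Δ) - ξ k * (Real.cos (ξ k * Δ) - Real.exp (-K * Δ)))
                / (K ^ 2 + ξ k ^ 2))
             + δ k * K * ((K * (Real.cos (ξ k * Δ) - Real.exp (-K * Δ)) + ξ k * Real.sin (ξ k * Δ))
                / (K ^ 2 + ξ k ^ 2))) * Real.cos (ξ k * t)) := by
  intro t ht
  have hη' : η ≠ 0 := ne_of_gt hη
  have hle : t ≤ t + Δ := by linarith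
  haveI : SigmaFinite (μ.trim (ℱ.le t)) := by infer_instance
  have hexpc : Continuous fun u : ℝ => Real.exp (K*u) :=
    Real.continuous_exp.comp (continuous_const.mul continuous_id)
  have hσc : Continuous σsq := by
    have hfe : σsq = fun u => γ₀ + (∑ k ∈ Finset.Icc 1 m, γ k * Real.sin (ξ k * u))
        + (∑ k ∈ Finset.Icc 1 m, δ k * Real.cos (ξ k * u)) := funext hσsq
    rw [hfe]
    exact (continuous_const.add (continuous_finset_sum _ fun k _ =>
      continuous_const.mul (Real.continuous_sin.comp (continuous_const.mul continuous_id)))).add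
      (continuous_finset_sum _ fun k _ =>
        continuous_const.mul (Real.continuous_cos.comp (continuous_const.mul continuous_id)))
  have hBcont : ∀ ω, Continuous fun u => B u ω := by
    intro ω
    have hfe : (fun u => B u ω) = fun u =>
        (ζ u ω - ζ 0 ω + K * ∫ v in (0:ℝ)..u, (ζ v ω - σsq v)) / η := by
      funext u
      have h := hSDE u ω
      field_simp
      linarith
    rw [hfe]
    exact (((hζcont ω).sub continuous_const).add
      (continuous_const.mul (primitive_continuous ((hζcont ω).sub hσc)))).div_const η
  -- pathwise representation
  set C : ℝ := K * Real.exp (-(K*(t+Δ))) * ∫ u in t..(t+Δ), Real.exp (K*u) * σsq u with hC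
  set N : Ω → ℝ := fun ω => B (t+Δ) ω - Real.exp (-(K*Δ)) * B t ω
      - K * Real.exp (-(K*(t+Δ))) * ∫ u in t..(t+Δ), Real.exp (K*u) * B u ω with hN
  have e1 : Real.exp (-(K*(t+Δ))) * Real.exp (K*(t+Δ)) = 1 := by
    rw [← Real.exp_add]; simp
  have e2 : Real.exp (-(K*(t+Δ))) * Real.exp (K*t) = Real.exp (-(K*Δ)) := by
    rw [← Real.exp_add]; ring_nf
  have hrep : ζ (t+Δ) = (fun ω => Real.exp (-(K*Δ)) * ζ t ω + C) + fun ω => η * N ω := by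
    funext ω
    have h1 := pathwise K η (ζ 0 ω) σsq (fun u => ζ u ω) (fun u => B u ω) hσc (hζcont ω)
      (hBcont ω) (hB0 ω) (fun s => hSDE s ω) (t+Δ)
    have h2 := pathwise K η (ζ 0 ω) σsq (fun u => ζ u ω) (fun u => B u ω) hσc (hζcont ω)
      (hBcont ω) (hB0 ω) (fun s => hSDE s ω) t
    have hsplitσ : (∫ u in (0:ℝ)..(t+Δ), Real.exp (K*u) * σsq u)
        = (∫ u in (0:ℝ)..t, Real.exp (K*u) * σsq u)
          + ∫ u in t..(t+Δ), Real.exp (K*u) * σsq u :=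
      (intervalIntegral.integral_add_adjacent_intervals
        ((hexpc.mul hσc).intervalIntegrable _ _) ((hexpc.mul hσc).intervalIntegrable _ _)).symm
    have hsplitB : (∫ u in (0:ℝ)..(t+Δ), Real.exp (K*u) * B u ω)
        = (∫ u in (0:ℝ)..t, Real.exp (K*u) * B u ω)
          + ∫ u in t..(t+Δ), Real.exp (K*u) * B u ω :=
      (intervalIntegral.integral_add_adjacent_intervals
        ((hexpc.mul (hBcont ω)).intervalIntegrable _ _)
        ((hexpc.mul (hBcont ω)).intervalIntegrable _ _)).symm
    rw [hsplitσ, hsplitB] at h1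
    show ζ (t+Δ) ω = (Real.exp (-(K*Δ)) * ζ t ω + C) + η * N ω
    rw [hC, hN]
    linear_combination (Real.exp (-(K*(t+Δ)))) * h1 - (Real.exp (-(K*(t+Δ)))) * h2
      - (ζ (t+Δ) ω - η * B (t+Δ) ω) * e1 + (ζ t ω - η * B t ω) * e2
  obtain ⟨hNint0, hNcond0⟩ := mart_part μ ℱ K t Δ hK hle B hB hBcont
  have hNint : Integrable N μ := by rw [hN]; exact hNint0
  have hNcond : μ[N|ℱ t] =ᵐ[μ] 0 := by rw [hN]; exact hNcond0
  -- assemble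
  have hg_int : Integrable (fun ω => Real.exp (-(K*Δ)) * ζ t ω + C) μ :=
    ((hζint t).const_mul _).add (integrable_const C)
  have hgmeas : StronglyMeasurable[ℱ t] fun ω => Real.exp (-(K*Δ)) * ζ t ω + C :=
    ((hζadapted t).stronglyMeasurable.const_mul _).add (@stronglyMeasurable_const _ _ (ℱ t) _ _)
  have hcond : μ[ζ (t+Δ)|ℱ t] =ᵐ[μ] fun ω => Real.exp (-(K*Δ)) * ζ t ω + C := by
    rw [hrep]
    refine (condExp_add hg_int ((hNint.const_mul η)) (ℱ t)).trans ?_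
    have hsm : (fun ω => η * N ω) = η • N := rfl
    have h3 : μ[fun ω => η * N ω|ℱ t] =ᵐ[μ] fun _ => 0 := by
      rw [hsm]
      refine (condExp_smul η N (ℱ t)).trans ?_
      filter_upwards [hNcond] with ω h
      simp [h]
    have h2 : μ[fun ω => Real.exp (-(K*Δ)) * ζ t ω + C|ℱ t]
        = fun ω => Real.exp (-(K*Δ)) * ζ t ω + C :=
      condExp_of_stronglyMeasurable (ℱ.le t) hgmeas hg_int
    rw [h2]
    filter_upwards [h3] with ω h
    simp only [Pi.add_apply, h]
    ring
  refine hcond.trans (Eventually.of_forall fun ω => ?_)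
  have hCv := const_val K γ₀ Δ t hK m γ δ ξ σsq hσsq
  rw [← hC] at hCv
  rw [hCv]
  rw [show Real.exp (-K*Δ) = Real.exp (-(K*Δ)) by ring_nf]
  ring
end
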